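/- arXiv:1901.00493 — 2 statements merged into one kernel-verified Lean document; each statement's English description precedes it below -/
import Mathlib

section
/- Let E be the (n+1)×(n+1) lower-triangular integer matrix with entries E_{ik} = σ_0(i - k) for 0 ≤ k ≤ i ≤ n and 0 otherwise, where σ_0 is the pentagonal number theorem sequence. Then E is invertible over ℤ, and its inverse has entries (E^{-1})_{ik} = p(i - k) for k ≤ i (and 0 otherwise), where p is the partition function. -/
/-- Coefficient of `x^n` in Euler's product `∏_{m ≥ 1} (1 - x^m)` (the pentagonal
number theorem sequence); factors with `m > n` do not affect this coefficient, so the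
product may be truncated at `m = n`. -/
noncomputable def sigma0 (n : ℕ) : ℤ :=
  PowerSeries.coeff (R := ℤ) n (∏ m ∈ Finset.Icc 1 n, (1 - PowerSeries.X ^ m))

/-- Coefficient of `x^n` in `∏_{m ≥ 1, m ≠ j} (1 - x^m)` (the `j`-laced sequence);
for `j = 0` this is the full Euler product. -/
noncomputable def sigmaJ (j n : ℕ) : ℤ :=
  PowerSeries.coeff (R := ℤ) n (∏ m ∈ (Finset.Icc 1 n).erase j, (1 - PowerSeries.X ^ m))

/-- `ρ(0) = 1`, and for `n ≥ 1`, `ρ(n)` is the number of positive divisors of `n`. -/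
def rho (n : ℕ) : ℤ := if n = 0 then 1 else (n.divisors.card : ℤ)

/-- Integer-indexed `ρ`, vanishing on negative arguments. -/
def rhoZ (m : ℤ) : ℤ := if 0 ≤ m then rho m.toNat else 0

/-- The σ-sequence: `σ(n) = ∑_{j=0}^{n} σ_j(n - j)`, the coefficient of `x^n` in the
σ-function `∑_{h ≥ 0} x^h ∏_{m ≥ 1, m ≠ h} (1 - x^m)`. -/
noncomputable def sigmaSeq (n : ℕ) : ℤ := ∑ j ∈ Finset.range (n+1), sigmaJ j (n - j)

/-- Integer-indexed pentagonal sequence, vanishing on negative arguments. -/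
noncomputable def sigma0Z (m : ℤ) : ℤ := if 0 ≤ m then sigma0 m.toNat else 0

/-- Integer-indexed partition function, vanishing on negative arguments. -/
noncomputable def partZ (m : ℤ) : ℤ := if 0 ≤ m then (Nat.card (Nat.Partition m.toNat) : ℤ) else 0

namespace Aux18
open PowerSeries Finset
open scoped Classical
noncomputable section
universe u
variable {α : Type*} {ι : Type u}
def indicatorSeries (α : Type*) [Semiring α] (s : Set ℕ) : PowerSeries α :=
  PowerSeries.mk fun n => if n ∈ s then 1 else 0

theorem coeff_indicator (s : Set ℕ) [Semiring α] (n : ℕ) :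
    coeff (R := α) n (indicatorSeries _ s) = if n ∈ s then 1 else 0 :=
  coeff_mk _ _

theorem coeff_indicator_pos (s : Set ℕ) [Semiring α] (n : ℕ) (h : n ∈ s) :
    coeff (R := α) n (indicatorSeries _ s) = 1 := by rw [coeff_indicator, if_pos h]

theorem coeff_indicator_neg (s : Set ℕ) [Semiring α] (n : ℕ) (h : n ∉ s) :
    coeff (R := α) n (indicatorSeries _ s) = 0 := by rw [coeff_indicator, if_neg h]

theorem constantCoeff_indicator (s : Set ℕ) [Semiring α] :
    constantCoeff (R := α) (indicatorSeries _ s) = if 0 ∈ s then 1 else 0 :=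
  rfl

theorem two_series (i : ℕ) [Semiring α] :
    1 + (X : PowerSeries α) ^ i.succ = indicatorSeries α {0, i.succ} := by
  ext n
  simp only [coeff_indicator, coeff_one, coeff_X_pow, Set.mem_insert_iff, Set.mem_singleton_iff,
    map_add]
  cases' n with d
  · simp [(Nat.succ_ne_zero i).symm]
  · simp [Nat.succ_ne_zero d]

theorem num_series' [Field α] (i : ℕ) :
    (1 - (X : PowerSeries α) ^ (i + 1))⁻¹ = indicatorSeries α {k | i + 1 ∣ k} := by
  rw [PowerSeries.inv_eq_iff_mul_eq_one]
  · ext n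
    cases n with
    | zero => simp [mul_sub, zero_pow, constantCoeff_indicator]
    | succ n =>
      simp only [coeff_one, if_false, mul_sub, mul_one, coeff_indicator,
        LinearMap.map_sub, reduceCtorEq]
      simp_rw [coeff_mul, coeff_X_pow, coeff_indicator, @boole_mul _ _ _ _]
      erw [@sum_ite _ _ _ _ _ (fun _ => Classical.propDecidable _), sum_ite]
      simp_rw [@filter_filter _ _ _ _ _, sum_const_zero, add_zero, sum_const, nsmul_eq_mul, mul_one,
        sub_eq_iff_eq_add, zero_add]
      symm
      split_ifs with h
      · suffices #{a ∈ antidiagonal (n + 1) | i + 1 ∣ a.fst ∧ a.snd = i + 1} = 1 by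
          simp only [Set.mem_setOf_eq]; convert congr_arg ((↑) : ℕ → α) this; norm_cast
        rw [card_eq_one]
        cases' h with p hp
        refine ⟨((i + 1) * (p - 1), i + 1), ?_⟩
        ext ⟨a₁, a₂⟩
        simp only [mem_filter, Prod.mk.injEq, HasAntidiagonal.mem_antidiagonal, mem_singleton]
        constructor
        · rintro ⟨a_left, ⟨a, rfl⟩, rfl⟩
          refine ⟨?_, rfl⟩
          rw [Nat.mul_sub_left_distrib, ← hp, ← a_left, mul_one, Nat.add_sub_cancel]
        · rintro ⟨rfl, rfl⟩
          match p with
          | 0 => rw [mul_zero] at hp; cases hp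
          | p + 1 => rw [hp]; simp [mul_add]
      · suffices #{a ∈ antidiagonal (n + 1) | i + 1 ∣ a.fst ∧ a.snd = i + 1} = 0 by
          simp only [Set.mem_setOf_eq]; convert congr_arg ((↑) : ℕ → α) this; norm_cast
        rw [card_eq_zero]
        apply eq_empty_of_forall_notMem
        simp only [Prod.forall, mem_filter, not_and, HasAntidiagonal.mem_antidiagonal]
        rintro _ h₁ h₂ ⟨a, rfl⟩ rfl
        apply h
        simp [← h₂]
  · simp [zero_pow]

theorem partialGF_prop (α : Type*) [CommSemiring α] (n : ℕ) (s : Finset ℕ) (hs : ∀ i ∈ s, 0 < i)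
    (c : ℕ → Set ℕ) (hc : ∀ i, i ∉ s → 0 ∈ c i) :
    #{p : n.Partition | (∀ j, p.parts.count j ∈ c j) ∧ ∀ j ∈ p.parts, j ∈ s} =
      coeff (R := α) n (∏ i ∈ s, indicatorSeries α ((· * i) '' c i)) := by
  simp_rw [coeff_prod, coeff_indicator, prod_boole, sum_boole]
  apply congr_arg
  simp only [mem_univ, forall_true_left, not_and, not_forall, exists_prop,
    Set.mem_image, not_exists]
  set φ : (a : Nat.Partition n) →
    a ∈ filter (fun p ↦ (∀ (j : ℕ), Multiset.count j p.parts ∈ c j) ∧ ∀ j ∈ p.parts, j ∈ s) univ →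
    ℕ →₀ ℕ := fun p _ => {
      toFun := fun i => Multiset.count i p.parts • i
      support := Finset.filter (fun i => i ≠ 0) p.parts.toFinset
      mem_support_toFun := fun a => by
        simp only [smul_eq_mul, ne_eq, mul_eq_zero, Multiset.count_eq_zero]
        rw [not_or, not_not]
        simp only [Multiset.mem_toFinset, not_not, mem_filter] }
  refine Finset.card_bij φ ?_ ?_ ?_
  · intro a ha
    simp only [φ, not_forall, not_exists, not_and, exists_prop, mem_filter]
    rw [mem_finsuppAntidiag]
    dsimp only [ne_eq, smul_eq_mul, id_eq, eq_mpr_eq_cast, le_eq_subset, Finsupp.coe_mk]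
    simp only [mem_univ, forall_true_left, not_and, not_forall, exists_prop,
      mem_filter, true_and] at ha
    refine ⟨⟨?_, fun i ↦ ?_⟩, fun i _ ↦ ⟨a.parts.count i, ha.1 i, rfl⟩⟩
    · conv_rhs => simp [← a.parts_sum]
      rw [sum_multiset_count_of_subset _ s]
      · simp only [smul_eq_mul]
      · intro i
        simp only [Multiset.mem_toFinset, not_not, mem_filter]
        apply ha.2
    · simp only [ne_eq, Multiset.mem_toFinset, not_not, mem_filter, and_imp]
      exact fun hi _ ↦ ha.2 i hi
  · intro p₁ hp₁ p₂ hp₂ h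
    apply Nat.Partition.ext
    simp only [true_and, mem_univ, mem_filter] at hp₁ hp₂
    ext i
    simp only [φ, ne_eq, Multiset.mem_toFinset, not_not, smul_eq_mul, Finsupp.mk.injEq] at h
    by_cases hi : i = 0
    · rw [hi]
      rw [Multiset.count_eq_zero_of_notMem]
      · rw [Multiset.count_eq_zero_of_notMem]
        intro a; exact Nat.lt_irrefl 0 (hs 0 (hp₂.2 0 a))
      intro a; exact Nat.lt_irrefl 0 (hs 0 (hp₁.2 0 a))
    · rw [← mul_left_inj' hi]
      rw [funext_iff] at h
      exact h.2 i
  · simp only [φ, mem_filter, mem_finsuppAntidiag, mem_univ, exists_prop, true_and, and_assoc]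
    rintro f ⟨hf, hf₃, hf₄⟩
    have hf' : f ∈ finsuppAntidiag s n := mem_finsuppAntidiag.mpr ⟨hf, hf₃⟩
    simp only [mem_finsuppAntidiag] at hf'
    refine ⟨⟨∑ i ∈ s, Multiset.replicate (f i / i) i, ?_, ?_⟩, ?_, ?_, ?_⟩
    · intro i hi
      simp only [exists_prop, Multiset.mem_sum, mem_map, Function.Embedding.coeFn_mk] at hi
      rcases hi with ⟨t, ht, z⟩
      apply hs
      rwa [Multiset.eq_of_mem_replicate z]
    · simp_rw [Multiset.sum_sum, Multiset.sum_replicate, Nat.nsmul_eq_mul]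
      rw [← hf'.1]
      refine sum_congr rfl fun i hi => Nat.div_mul_cancel ?_
      rcases hf₄ i hi with ⟨w, _, hw₂⟩
      rw [← hw₂]
      exact dvd_mul_left _ _
    · intro i
      simp_rw [Multiset.count_sum', Multiset.count_replicate, sum_ite_eq']
      split_ifs with h
      · rcases hf₄ i h with ⟨w, hw₁, hw₂⟩
        rwa [← hw₂, Nat.mul_div_cancel _ (hs i h)]
      · exact hc _ h
    · intro i hi
      rw [Multiset.mem_sum] at hi
      rcases hi with ⟨j, hj₁, hj₂⟩
      rwa [Multiset.eq_of_mem_replicate hj₂]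
    · ext i
      simp_rw [Multiset.count_sum', Multiset.count_replicate, sum_ite_eq']
      simp only [ne_eq, Multiset.mem_toFinset, not_not, smul_eq_mul, ite_mul,
        zero_mul, Finsupp.coe_mk]
      split_ifs with h
      · apply Nat.div_mul_cancel
        rcases hf₄ i h with ⟨w, _, hw₂⟩
        apply Dvd.intro_left _ hw₂
      · apply symm
        rw [← Finsupp.notMem_support_iff]
        exact notMem_mono hf'.2 h


lemma truncation (a N : ℕ) (h : a ≤ N) :
    PowerSeries.coeff (R := ℚ) a (∏ j ∈ Finset.Icc 1 N, (1 - PowerSeries.X ^ j)) =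
    PowerSeries.coeff (R := ℚ) a (∏ j ∈ Finset.Icc 1 a, (1 - PowerSeries.X ^ j)) := by
  induction N, h using Nat.le_induction with
  | base => rfl
  | succ N hN ih =>
    rw [Finset.prod_Icc_succ_top (by omega), mul_sub, mul_one, map_sub,
      PowerSeries.coeff_mul_X_pow', if_neg (by omega), sub_zero, ih]

lemma coeff_euler_rat (a N : ℕ) (h : a ≤ N) :
    PowerSeries.coeff (R := ℚ) a (∏ j ∈ Finset.Icc 1 N, (1 - PowerSeries.X ^ j)) = (sigma0 a : ℚ) := by
  rw [truncation a N h, sigma0]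
  have hm : (∏ j ∈ Finset.Icc 1 a, (1 - PowerSeries.X ^ j : PowerSeries ℚ)) =
      PowerSeries.map (Int.castRingHom ℚ) (∏ j ∈ Finset.Icc 1 a, (1 - PowerSeries.X ^ j)) := by
    rw [map_prod]
    simp
  rw [hm, PowerSeries.coeff_map]
  simp

lemma coeff_partGF (b N : ℕ) (h : b ≤ N) :
    PowerSeries.coeff (R := ℚ) b (∏ i ∈ Finset.range N, (1 - PowerSeries.X ^ (i+1) : PowerSeries ℚ)⁻¹) =
      (Nat.card (Nat.Partition b) : ℚ) := by
  have hprop := partialGF_prop ℚ b ((range N).map ⟨Nat.succ, Nat.succ_injective⟩)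
      (by rintro i hi; rw [mem_map] at hi; obtain ⟨a, -, rfl⟩ := hi; exact Nat.succ_pos a)
      (fun _ => Set.univ) (fun _ _ => trivial)
  rw [Finset.prod_map] at hprop
  have heq : ∀ i : ℕ,
      indicatorSeries ℚ ((· * ((⟨Nat.succ, Nat.succ_injective⟩ : ℕ ↪ ℕ) i)) '' Set.univ) =
      (1 - PowerSeries.X ^ (i+1) : PowerSeries ℚ)⁻¹ := by
    intro i
    have hset : ((· * ((⟨Nat.succ, Nat.succ_injective⟩ : ℕ ↪ ℕ) i)) '' Set.univ : Set ℕ)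
        = {k | i + 1 ∣ k} := by
      ext k
      simp only [Set.mem_image, Set.mem_univ, true_and, Set.mem_setOf_eq,
        Function.Embedding.coeFn_mk, Nat.succ_eq_add_one]
      constructor
      · rintro ⟨p, rfl⟩; exact Dvd.intro_left p rfl
      · rintro ⟨p, rfl⟩; exact ⟨p, mul_comm _ _⟩
    rw [hset, num_series']
  simp_rw [heq] at hprop
  rw [← hprop]
  have hfil : filter (fun p : b.Partition =>
      (∀ j, p.parts.count j ∈ (Set.univ : Set ℕ)) ∧
        ∀ j ∈ p.parts, j ∈ (range N).map ⟨Nat.succ, Nat.succ_injective⟩) univ = univ := by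
    apply Finset.filter_true_of_mem
    intro p _
    refine ⟨fun _ => trivial, fun j hj => ?_⟩
    have h1 : 0 < j := p.parts_pos hj
    have h2 : j ≤ b := by
      have := Multiset.single_le_sum (fun _ _ => Nat.zero_le _) _ hj
      rwa [p.parts_sum] at this
    rw [mem_map]
    exact ⟨j - 1, mem_range.mpr (by omega), by simp only [Function.Embedding.coeFn_mk]; omega⟩
  rw [hfil, card_univ, Nat.card_eq_fintype_card]

lemma keyConv (m : ℕ) :
    (∑ d ∈ Finset.range (m+1), sigma0 (m - d) * (Nat.card (Nat.Partition d) : ℤ)) =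
      if m = 0 then 1 else 0 := by
  have hq : ((∑ d ∈ Finset.range (m+1), sigma0 (m - d) * (Nat.card (Nat.Partition d) : ℤ) : ℤ) : ℚ)
      = ((if m = 0 then 1 else 0 : ℤ) : ℚ) := by
    push_cast
    have hEF : (∏ i ∈ Finset.range m, (1 - PowerSeries.X ^ (i+1) : PowerSeries ℚ)) *
        (∏ i ∈ Finset.range m, (1 - PowerSeries.X ^ (i+1) : PowerSeries ℚ)⁻¹) = 1 := by
      rw [← Finset.prod_mul_distrib]
      apply Finset.prod_eq_one
      intro i _
      exact PowerSeries.mul_inv_cancel _ (by simp)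
    have hcoeff := congrArg (PowerSeries.coeff (R := ℚ) m) hEF
    rw [PowerSeries.coeff_mul, PowerSeries.coeff_one,
      Finset.Nat.sum_antidiagonal_eq_sum_range_succ_mk] at hcoeff
    have hEIcc : (∏ i ∈ Finset.range m, (1 - PowerSeries.X ^ (i+1) : PowerSeries ℚ)) =
        ∏ j ∈ Finset.Icc 1 m, (1 - PowerSeries.X ^ j) := by
      rw [← Finset.Ico_add_one_right_eq_Icc, Finset.prod_Ico_eq_prod_range]
      simp [add_comm]
    rw [← Finset.sum_range_reflect, ← hcoeff]
    apply Finset.sum_congr rfl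
    intro d hd
    rw [Finset.mem_range] at hd
    have e2 : m + 1 - 1 - d = m - d := by omega
    have e1 : m - (m - d) = d := by omega
    rw [e2, e1]
    simp only
    rw [hEIcc, coeff_euler_rat d m (by omega), coeff_partGF (m - d) m (by omega)]
  exact (Int.cast_injective (α := ℚ)) hq
lemma sigma0Z_neg {m : ℤ} (h : m < 0) : _root_.sigma0Z m = 0 := by
  rw [sigma0Z, if_neg (by omega)]

lemma partZ_neg {m : ℤ} (h : m < 0) : _root_.partZ m = 0 := by
  rw [partZ, if_neg (by omega)]

lemma entry (n : ℕ) (i k : Fin (n+1)) :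
    ∑ l : Fin (n+1), sigma0Z ((i : ℤ) - (l : ℤ)) * partZ ((l : ℤ) - (k : ℤ)) =
      if i = k then 1 else 0 := by
  have hsum : ∑ l : Fin (n+1), sigma0Z ((i : ℤ) - (l : ℤ)) * partZ ((l : ℤ) - (k : ℤ)) =
      ∑ l ∈ Finset.range (n+1),
        sigma0Z (((i : ℕ) : ℤ) - (l : ℤ)) * partZ ((l : ℤ) - ((k : ℕ) : ℤ)) :=
    Fin.sum_univ_eq_sum_range
      (fun l : ℕ => sigma0Z (((i : ℕ) : ℤ) - (l : ℤ)) * partZ ((l : ℤ) - ((k : ℕ) : ℤ))) (n+1)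
  rw [hsum]
  have hi : (i : ℕ) < n + 1 := i.isLt
  have hk : (k : ℕ) < n + 1 := k.isLt
  rcases lt_or_ge (i : ℕ) (k : ℕ) with hik | hik
  · rw [if_neg (by intro h; rw [h] at hik; omega)]
    apply Finset.sum_eq_zero
    intro l _
    by_cases hle : l ≤ (i : ℕ)
    · rw [partZ_neg (by omega), mul_zero]
    · rw [sigma0Z_neg (by omega), zero_mul]
  · have hsub : Finset.Icc (k : ℕ) (i : ℕ) ⊆ Finset.range (n+1) := by
      intro l hl
      rw [Finset.mem_Icc] at hl
      rw [Finset.mem_range]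
      omega
    rw [← Finset.sum_subset hsub (by
      intro l _ hl
      rw [Finset.mem_Icc] at hl
      by_cases hle : l ≤ (i : ℕ)
      · rw [partZ_neg (by omega), mul_zero]
      · rw [sigma0Z_neg (by omega), zero_mul])]
    rw [← Finset.Ico_add_one_right_eq_Icc, Finset.sum_Ico_eq_sum_range]
    have hm : (i : ℕ) + 1 - (k : ℕ) = ((i : ℕ) - (k : ℕ)) + 1 := by omega
    rw [hm]
    have hterm : ∀ d ∈ Finset.range (((i : ℕ) - (k : ℕ)) + 1),
        sigma0Z (((i : ℕ) : ℤ) - (((k : ℕ) + d : ℕ) : ℤ)) *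
          partZ ((((k : ℕ) + d : ℕ) : ℤ) - ((k : ℕ) : ℤ))
        = sigma0 (((i : ℕ) - (k : ℕ)) - d) * (Nat.card (Nat.Partition d) : ℤ) := by
      intro d hd
      rw [Finset.mem_range] at hd
      have h1 : (((i : ℕ) : ℤ) - (((k : ℕ) + d : ℕ) : ℤ)) = ((((i : ℕ) - (k : ℕ)) - d : ℕ) : ℤ) := by
        push_cast; omega
      have h2 : ((((k : ℕ) + d : ℕ) : ℤ) - ((k : ℕ) : ℤ)) = (d : ℤ) := by push_cast; omega
      rw [h1, h2, sigma0Z, partZ, if_pos (Int.natCast_nonneg _), if_pos (Int.natCast_nonneg _),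
        Int.toNat_natCast, Int.toNat_natCast]
    rw [Finset.sum_congr rfl hterm, keyConv]
    have hiff : i = k ↔ (i : ℕ) - (k : ℕ) = 0 := by
      rw [Fin.ext_iff]; omega
    by_cases h : i = k
    · rw [if_pos (hiff.mp h), if_pos h]
    · rw [if_neg (fun hc => h (hiff.mpr hc)), if_neg h]
end
end Aux18
/-- The `(n+1) × (n+1)` lower-triangular Toeplitz matrix `E_{ik} = σ_0(i - k)` is
invertible over `ℤ`, with inverse `(E⁻¹)_{ik} = p(i - k)`, `p` the partition function. -/

theorem stmt18 (n : ℕ) :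
    IsUnit (Matrix.of fun i k : Fin (n+1) => sigma0Z ((i : ℤ) - (k : ℤ))) ∧
    (Matrix.of fun i k : Fin (n+1) => sigma0Z ((i : ℤ) - (k : ℤ)))⁻¹ =
      Matrix.of fun i k : Fin (n+1) => partZ ((i : ℤ) - (k : ℤ)) := by
  set A := Matrix.of fun i k : Fin (n+1) => sigma0Z ((i : ℤ) - (k : ℤ)) with hA
  set B := Matrix.of fun i k : Fin (n+1) => partZ ((i : ℤ) - (k : ℤ)) with hB
  have hAB : A * B = 1 := by
    ext i k
    rw [Matrix.mul_apply]
    simp only [hA, hB, Matrix.of_apply]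
    rw [Aux18.entry n i k, Matrix.one_apply]
  exact ⟨⟨⟨A, B, hAB, mul_eq_one_comm.mp hAB⟩, rfl⟩, Matrix.inv_eq_right_inv hAB⟩
end

section
/- With E the (n+1)×(n+1) lower-triangular Toeplitz matrix E_{ik} = σ_0(i - k), the vector ρ⃗ = (ρ(0), ..., ρ(n))ᵀ and σ⃗ = (σ(0), ..., σ(n))ᵀ satisfy ρ⃗ = E^{-1} σ⃗, equivalently ρ(i) = ∑_{k=0}^{i} p(i - k) σ(k) for all 0 ≤ i ≤ n, where p is the partition function. -/
/-- The partition function `p(m)`. -/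
noncomputable def partN (m : ℕ) : ℕ := Nat.card (Nat.Partition m)


open PowerSeries Finset
open scoped Classical

namespace Stmt19Aux

noncomputable section

def indicatorSeries (α : Type*) [Semiring α] (s : Set ℕ) : PowerSeries α :=
  PowerSeries.mk fun n => if n ∈ s then 1 else 0

theorem coeff_indicator {α : Type*} (s : Set ℕ) [Semiring α] (n : ℕ) :
    coeff (R := α) n (indicatorSeries _ s) = if n ∈ s then 1 else 0 :=
  coeff_mk _ _

theorem partialGF_prop (α : Type*) [CommSemiring α] (n : ℕ) (s : Finset ℕ) (hs : ∀ i ∈ s, 0 < i)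
    (c : ℕ → Set ℕ) (hc : ∀ i, i ∉ s → 0 ∈ c i) :
    #{p : n.Partition | (∀ j, p.parts.count j ∈ c j) ∧ ∀ j ∈ p.parts, j ∈ s} =
      coeff (R := α) n (∏ i ∈ s, indicatorSeries α ((· * i) '' c i)) := by
  simp_rw [coeff_prod, coeff_indicator, prod_boole, sum_boole]
  apply congr_arg
  simp only [mem_univ, forall_true_left, not_and, not_forall, exists_prop,
    Set.mem_image, not_exists]
  set φ : (a : Nat.Partition n) →
    a ∈ filter (fun p ↦ (∀ (j : ℕ), Multiset.count j p.parts ∈ c j) ∧ ∀ j ∈ p.parts, j ∈ s) univ →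
    ℕ →₀ ℕ := fun p _ => {
      toFun := fun i => Multiset.count i p.parts • i
      support := Finset.filter (fun i => i ≠ 0) p.parts.toFinset
      mem_support_toFun := fun a => by
        simp only [smul_eq_mul, ne_eq, mul_eq_zero, Multiset.count_eq_zero]
        rw [not_or, not_not]
        simp only [Multiset.mem_toFinset, not_not, mem_filter] }
  refine Finset.card_bij φ ?_ ?_ ?_
  · intro a ha
    simp only [φ, not_forall, not_exists, not_and, exists_prop, mem_filter]
    rw [mem_finsuppAntidiag]
    dsimp only [ne_eq, smul_eq_mul, id_eq, eq_mpr_eq_cast, le_eq_subset, Finsupp.coe_mk]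
    simp only [mem_univ, forall_true_left, not_and, not_forall, exists_prop,
      mem_filter, true_and] at ha
    refine ⟨⟨?_, fun i ↦ ?_⟩, fun i _ ↦ ⟨a.parts.count i, ha.1 i, rfl⟩⟩
    · conv_rhs => simp [← a.parts_sum]
      rw [sum_multiset_count_of_subset _ s]
      · simp only [smul_eq_mul]
      · intro i
        simp only [Multiset.mem_toFinset, not_not, mem_filter]
        apply ha.2
    · simp only [ne_eq, Multiset.mem_toFinset, not_not, mem_filter, and_imp]
      exact fun hi _ ↦ ha.2 i hi
  · intro p₁ hp₁ p₂ hp₂ h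
    apply Nat.Partition.ext
    simp only [true_and, mem_univ, mem_filter] at hp₁ hp₂
    ext i
    simp only [φ, ne_eq, Multiset.mem_toFinset, not_not, smul_eq_mul, Finsupp.mk.injEq] at h
    by_cases hi : i = 0
    · rw [hi]
      rw [Multiset.count_eq_zero_of_notMem]
      · rw [Multiset.count_eq_zero_of_notMem]
        intro a; exact Nat.lt_irrefl 0 (hs 0 (hp₂.2 0 a))
      intro a; exact Nat.lt_irrefl 0 (hs 0 (hp₁.2 0 a))
    · rw [← mul_left_inj' hi]
      rw [funext_iff] at h
      exact h.2 i
  · simp only [φ, mem_filter, mem_finsuppAntidiag, mem_univ, exists_prop, true_and, and_assoc]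
    rintro f ⟨hf, hf₃, hf₄⟩
    have hf' : f ∈ finsuppAntidiag s n := mem_finsuppAntidiag.mpr ⟨hf, hf₃⟩
    simp only [mem_finsuppAntidiag] at hf'
    refine ⟨⟨∑ i ∈ s, Multiset.replicate (f i / i) i, ?_, ?_⟩, ?_, ?_, ?_⟩
    · intro i hi
      simp only [exists_prop, Multiset.mem_sum, mem_map, Function.Embedding.coeFn_mk] at hi
      rcases hi with ⟨t, ht, z⟩
      apply hs
      rwa [Multiset.eq_of_mem_replicate z]
    · simp_rw [Multiset.sum_sum, Multiset.sum_replicate, Nat.nsmul_eq_mul]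
      rw [← hf'.1]
      refine sum_congr rfl fun i hi => Nat.div_mul_cancel ?_
      rcases hf₄ i hi with ⟨w, _, hw₂⟩
      rw [← hw₂]
      exact dvd_mul_left _ _
    · intro i
      simp_rw [Multiset.count_sum', Multiset.count_replicate, sum_ite_eq']
      split_ifs with h
      · rcases hf₄ i h with ⟨w, hw₁, hw₂⟩
        rwa [← hw₂, Nat.mul_div_cancel _ (hs i h)]
      · exact hc _ h
    · intro i hi
      rw [Multiset.mem_sum] at hi
      rcases hi with ⟨j, hj₁, hj₂⟩
      rwa [Multiset.eq_of_mem_replicate hj₂]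
    · ext i
      simp_rw [Multiset.count_sum', Multiset.count_replicate, sum_ite_eq']
      simp only [ne_eq, Multiset.mem_toFinset, not_not, smul_eq_mul, ite_mul,
        zero_mul, Finsupp.coe_mk]
      split_ifs with h
      · apply Nat.div_mul_cancel
        rcases hf₄ i h with ⟨w, _, hw₂⟩
        apply Dvd.intro_left _ hw₂
      · apply symm
        rw [← Finsupp.notMem_support_iff]
        exact notMem_mono hf'.2 h

/-- the indicator series of multiples of `i`. -/
def ind (i : ℕ) : PowerSeries ℤ := indicatorSeries ℤ {k | i ∣ k}

def FF (N : ℕ) : PowerSeries ℤ := ∏ m ∈ Icc 1 N, (1 - X ^ m)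
def PP (N : ℕ) : PowerSeries ℤ := ∏ i ∈ Icc 1 N, ind i
def DD (N : ℕ) : PowerSeries ℤ := 1 + ∑ h ∈ Icc 1 N, X ^ h * ind h
def SS (N : ℕ) : PowerSeries ℤ :=
  ∑ h ∈ range (N+1), X ^ h * ∏ m ∈ (Icc 1 N).erase h, (1 - X ^ m)

theorem one_sub_X_pow_mul_ind {i : ℕ} (hi : 0 < i) : (1 - X ^ i) * ind i = 1 := by
  ext n
  simp only [sub_mul, one_mul, map_sub, coeff_X_pow_mul', ind, coeff_indicator,
    Set.mem_setOf_eq, coeff_one]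
  by_cases h : i ≤ n
  · have hn0 : n ≠ 0 := by omega
    rw [if_pos h, if_neg hn0]
    have hiff : i ∣ n ↔ i ∣ n - i := by
      constructor
      · intro hd; exact Nat.dvd_sub hd dvd_rfl
      · intro hd
        have := Nat.dvd_add hd (dvd_refl i)
        rwa [Nat.sub_add_cancel h] at this
    by_cases hd : i ∣ n
    · rw [if_pos hd, if_pos (hiff.mp hd), sub_self]
    · rw [if_neg hd, if_neg (fun hh => hd (hiff.mpr hh)), sub_self]
  · rw [if_neg h]
    rcases Nat.eq_zero_or_pos n with rfl | hn
    · rw [if_pos (dvd_zero i), if_pos rfl, sub_zero]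
    · rw [if_neg (fun hd => h (Nat.le_of_dvd hn hd)), if_neg (by omega), sub_zero]

theorem FF_mul_PP (N : ℕ) : FF N * PP N = 1 := by
  rw [FF, PP, ← prod_mul_distrib]
  rw [prod_congr rfl fun i hi => one_sub_X_pow_mul_ind (mem_Icc.mp hi).1]
  exact prod_const_one

theorem FF_mul_DD (N : ℕ) : FF N * DD N = SS N := by
  have hr : range (N+1) = insert 0 (Icc 1 N) := by
    ext x; simp [mem_range, mem_insert, mem_Icc]; omega
  rw [SS, hr, sum_insert (by simp)]
  rw [pow_zero, one_mul, erase_eq_of_notMem (by simp), ← FF]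
  rw [DD, mul_add, mul_one]
  congr 1
  rw [mul_sum]
  refine sum_congr rfl fun h hh => ?_
  have h1 : FF N = (1 - X ^ h) * ∏ m ∈ (Icc 1 N).erase h, (1 - X ^ m) :=
    (mul_prod_erase _ _ hh).symm
  have key := one_sub_X_pow_mul_ind (mem_Icc.mp hh).1
  rw [h1]
  calc ((1 - X ^ h) * ∏ m ∈ (Icc 1 N).erase h, (1 - X ^ m)) * (X ^ h * ind h)
      = ((1 - X ^ h) * ind h) * (X ^ h * ∏ m ∈ (Icc 1 N).erase h, (1 - X ^ m)) := by ring
    _ = X ^ h * ∏ m ∈ (Icc 1 N).erase h, (1 - X ^ m) := by rw [key, one_mul]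

theorem prod_one_sub_dvd {v : Finset ℕ} {m : ℕ} (hv : ∀ i ∈ v, m < i) :
    (X : PowerSeries ℤ) ^ (m+1) ∣ (∏ i ∈ v, (1 - X ^ i)) - 1 := by
  classical
  induction v using Finset.induction_on with
  | empty => simp
  | @insert a s ha ih =>
    rw [prod_insert ha]
    have h1 : (X : PowerSeries ℤ) ^ (m+1) ∣ (∏ i ∈ s, (1 - X ^ i)) - 1 :=
      ih fun i hi => hv i (mem_insert_of_mem hi)
    have h2 : (X : PowerSeries ℤ) ^ (m+1) ∣ X ^ a :=
      pow_dvd_pow _ (hv a (mem_insert_self a s))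
    have h3 : (1 - (X : PowerSeries ℤ) ^ a) * (∏ i ∈ s, (1 - X ^ i)) - 1
        = ((∏ i ∈ s, (1 - X ^ i)) - 1) - X ^ a * (∏ i ∈ s, (1 - X ^ i)) := by ring
    rw [h3]
    exact dvd_sub h1 (h2.mul_right _)

theorem coeff_eq_of_dvd {f g : PowerSeries ℤ} {m k : ℕ}
    (h : (X : PowerSeries ℤ) ^ (m+1) ∣ f - g) (hk : k ≤ m) : coeff (R := ℤ) k f = coeff (R := ℤ) k g := by
  have := X_pow_dvd_iff.mp h k (by omega)
  rw [map_sub] at this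
  linarith [this]

theorem coeff_prod_subset {u t : Finset ℕ} (hts : t ⊆ u) {m : ℕ}
    (h : ∀ i ∈ u, i ∉ t → m < i) {k : ℕ} (hk : k ≤ m) :
    coeff (R := ℤ) k (∏ i ∈ u, (1 - X ^ i)) = coeff (R := ℤ) k (∏ i ∈ t, (1 - X ^ i)) := by
  refine coeff_eq_of_dvd ?_ hk
  rw [← prod_sdiff hts]
  have h3 : (∏ i ∈ u \ t, (1 - (X : PowerSeries ℤ) ^ i)) * (∏ i ∈ t, (1 - X ^ i))
        - (∏ i ∈ t, (1 - X ^ i))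
      = ((∏ i ∈ u \ t, (1 - X ^ i)) - 1) * (∏ i ∈ t, (1 - X ^ i)) := by ring
  rw [h3]
  exact (prod_one_sub_dvd fun i hi => h i (mem_sdiff.mp hi).1 (mem_sdiff.mp hi).2).mul_right _

theorem coeff_FF {N n : ℕ} (hn : n ≤ N) : coeff (R := ℤ) n (FF N) = sigma0 n := by
  rw [FF, sigma0]
  exact coeff_prod_subset (Icc_subset_Icc le_rfl hn)
    (fun i hi hni => by simp only [mem_Icc] at *; omega) le_rfl

theorem coeff_erase {N j n : ℕ} (hn : n ≤ N) :
    coeff (R := ℤ) n (∏ m ∈ (Icc 1 N).erase j, (1 - X ^ m)) = sigmaJ j n := by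
  rw [sigmaJ]
  refine coeff_prod_subset (erase_subset_erase _ (Icc_subset_Icc le_rfl hn)) ?_ le_rfl
  intro i hi hni
  simp only [mem_erase, mem_Icc] at *
  omega

theorem coeff_SS {N n : ℕ} (hn : n ≤ N) : coeff (R := ℤ) n (SS N) = sigmaSeq n := by
  rw [SS, map_sum, sigmaSeq]
  have hzero : ∀ x ∈ range (N+1), x ∉ range (n+1) →
      coeff (R := ℤ) n (X ^ x * ∏ m ∈ (Icc 1 N).erase x, (1 - X ^ m)) = 0 := by
    intro x hx hnx
    rw [coeff_X_pow_mul', if_neg (by simp only [mem_range] at hx hnx; omega)]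
  rw [← sum_subset (range_subset_range.mpr (by omega : n+1 ≤ N+1)) hzero]
  refine sum_congr rfl fun j hj => ?_
  rw [coeff_X_pow_mul', if_pos (by simp only [mem_range] at hj; omega)]
  exact coeff_erase (by omega)

theorem coeff_PP {N n : ℕ} (hn : n ≤ N) : coeff (R := ℤ) n (PP N) = partN n := by
  have himg : ∀ i : ℕ, (· * i) '' (Set.univ : Set ℕ) = {k | i ∣ k} := by
    intro i
    ext k
    simp only [Set.image_univ, Set.mem_range, Set.mem_setOf_eq]
    constructor
    · rintro ⟨j, rfl⟩; exact dvd_mul_left i j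
    · rintro ⟨c, rfl⟩; exact ⟨c, mul_comm c i⟩
  have := partialGF_prop ℤ n (Icc 1 N) (fun i hi => (mem_Icc.mp hi).1)
    (fun _ => (Set.univ : Set ℕ)) (fun _ _ => trivial)
  simp_rw [himg] at this
  rw [PP]
  simp only [ind]
  rw [← this]
  have hfilter : ({p : n.Partition |
      (∀ j, p.parts.count j ∈ (Set.univ : Set ℕ)) ∧ ∀ j ∈ p.parts, j ∈ Icc 1 N} : Finset _)
      = Finset.univ := by
    refine Finset.eq_univ_iff_forall.mpr fun p => ?_
    simp only [Set.mem_setOf_eq, mem_filter, mem_univ, true_and, Set.mem_univ, mem_Icc]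
    exact ⟨fun _ => trivial, fun j hj =>
      ⟨p.parts_pos hj, le_trans (le_trans (Multiset.le_sum_of_mem hj)
        (le_of_eq p.parts_sum)) hn⟩⟩
  rw [hfilter, partN]
  simp [Nat.card_eq_fintype_card]

theorem coeff_DD {N n : ℕ} (hn : n ≤ N) : coeff (R := ℤ) n (DD N) = rho n := by
  rw [DD, map_add, map_sum, coeff_one]
  have hterm : ∀ h ∈ Icc 1 N, coeff (R := ℤ) n (X ^ h * ind h)
      = if h ∈ n.divisors then (1 : ℤ) else 0 := by
    intro h hh
    have h1 : 1 ≤ h := (mem_Icc.mp hh).1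
    rw [coeff_X_pow_mul', ind]
    by_cases hle : h ≤ n
    · rcases Nat.eq_zero_or_pos n with rfl | hn0
      · interval_cases h
      · rw [if_pos hle, coeff_indicator, Set.mem_setOf_eq]
        have hiff : h ∣ n - h ↔ h ∣ n := by
          constructor
          · intro hd
            have := Nat.dvd_add hd (dvd_refl h)
            rwa [Nat.sub_add_cancel hle] at this
          · intro hd; exact Nat.dvd_sub hd dvd_rfl
        by_cases hd : h ∣ n
        · rw [if_pos (hiff.mpr hd), if_pos (Nat.mem_divisors.mpr ⟨hd, by omega⟩)]
        · rw [if_neg (fun hc => hd (hiff.mp hc)), if_neg (fun hc => hd (Nat.mem_divisors.mp hc).1)]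
    · rw [if_neg hle, if_neg]
      intro hmem
      obtain ⟨hd, hn0⟩ := Nat.mem_divisors.mp hmem
      exact hle (Nat.le_of_dvd (Nat.pos_of_ne_zero hn0) hd)
  rw [sum_congr rfl hterm, sum_ite_mem, rho]
  have hinter : Icc 1 N ∩ n.divisors = n.divisors := by
    refine inter_eq_right.mpr fun d hd => ?_
    rw [Nat.mem_divisors] at hd
    rw [mem_Icc]
    have hpos := Nat.pos_of_ne_zero hd.2
    exact ⟨Nat.pos_of_dvd_of_pos hd.1 hpos, le_trans (Nat.le_of_dvd hpos hd.1) hn⟩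
  rw [hinter]
  rcases Nat.eq_zero_or_pos n with rfl | hn0
  · simp
  · rw [if_neg (by omega), if_neg (by omega)]
    simp

theorem DD_eq_PP_mul_SS (N : ℕ) : DD N = PP N * SS N := by
  calc DD N = (FF N * PP N) * DD N := by rw [FF_mul_PP, one_mul]
    _ = PP N * (FF N * DD N) := by ring
    _ = PP N * SS N := by rw [FF_mul_DD]

/-- convolution identity 1: `∑_{k ≤ i} σ₀(k) ρ(i - k) = σ(i)`. -/
theorem conv1 {n i : ℕ} (hi : i ≤ n) :
    ∑ k ∈ range (i+1), sigma0 k * rho (i - k) = sigmaSeq i := by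
  have h := congrArg (coeff (R := ℤ) i) (FF_mul_DD n)
  rw [coeff_mul, coeff_SS hi] at h
  rw [← h, Finset.Nat.sum_antidiagonal_eq_sum_range_succ_mk]
  refine sum_congr rfl fun k hk => ?_
  simp only [mem_range] at hk
  rw [coeff_FF (by omega), coeff_DD (by omega)]

/-- convolution identity 2: `∑_{k ≤ i} p(k) σ(i - k) = ρ(i)`. -/
theorem conv2 {n i : ℕ} (hi : i ≤ n) :
    ∑ k ∈ range (i+1), (partN k : ℤ) * sigmaSeq (i - k) = rho i := by
  have h := congrArg (coeff (R := ℤ) i) (DD_eq_PP_mul_SS n)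
  rw [coeff_mul, coeff_DD hi] at h
  rw [h, Finset.Nat.sum_antidiagonal_eq_sum_range_succ_mk]
  refine sum_congr rfl fun k hk => ?_
  simp only [mem_range] at hk
  rw [coeff_PP (by omega), coeff_SS (by omega)]

end
end Stmt19Aux

open Stmt19Aux

/-- Identity (3.3): with `E_{ik} = σ_0(i-k)` the `(n+1) × (n+1)` Toeplitz matrix,
`ρ⃗ = E⁻¹ σ⃗`; equivalently `ρ(i) = ∑_{k=0}^{i} p(i-k) σ(k)` for all `0 ≤ i ≤ n`. -/
theorem stmt19 (n : ℕ) :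
    (fun i : Fin (n+1) => rhoZ (i : ℤ)) =
      (Matrix.of fun i k : Fin (n+1) => sigma0Z ((i : ℤ) - (k : ℤ)))⁻¹.mulVec
        (fun k : Fin (n+1) => sigmaSeq k) ∧
    ∀ i : ℕ, i ≤ n →
      rhoZ (i : ℤ) = ∑ k ∈ Finset.range (i+1), (partN (i - k) : ℤ) * sigmaSeq k := by
  classical
  have hrz : ∀ i : ℕ, rhoZ (i : ℤ) = rho i := by
    intro i; simp [rhoZ]
  constructor
  · set E := Matrix.of fun i k : Fin (n+1) => sigma0Z ((i : ℤ) - (k : ℤ)) with hE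
    have hE0 : sigma0 0 = 1 := by
      rw [sigma0, Finset.Icc_eq_empty (by omega)]
      simp
    have htri : E.BlockTriangular OrderDual.toDual := by
      intro i j hij
      have hlt : i < j := hij
      have : (i : ℤ) - (j : ℤ) < 0 := by
        have : (i : ℕ) < (j : ℕ) := hlt
        omega
      simp only [hE, Matrix.of_apply, sigma0Z, if_neg (by omega : ¬ (0:ℤ) ≤ (i:ℤ) - (j:ℤ))]
    have hdet : E.det = 1 := by
      rw [Matrix.det_of_lowerTriangular E htri]
      refine Finset.prod_eq_one fun i _ => ?_
      simp [hE, sigma0Z, hE0]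
    have hmv : E.mulVec (fun i : Fin (n+1) => rhoZ (i : ℤ)) = (fun k : Fin (n+1) => sigmaSeq k) := by
      funext i
      have hIle : (i : ℕ) ≤ n := by omega
      show ∑ k : Fin (n+1), sigma0Z ((i : ℤ) - (k : ℤ)) * rhoZ (k : ℤ) = sigmaSeq i
      rw [Fin.sum_univ_eq_sum_range (fun k : ℕ => sigma0Z ((i : ℤ) - (k : ℤ)) * rhoZ (k : ℤ))]
      have hterm : ∀ k ∈ range (n+1), sigma0Z ((i : ℤ) - (k : ℤ)) * rhoZ (k : ℤ)
          = if k ≤ (i : ℕ) then sigma0 ((i : ℕ) - k) * rho k else 0 := by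
        intro k _
        by_cases hk : k ≤ (i : ℕ)
        · rw [if_pos hk, hrz, sigma0Z, if_pos (by omega)]
          congr 2
          omega
        · rw [if_neg hk, sigma0Z, if_neg (by omega), zero_mul]
      rw [sum_congr rfl hterm,
        ← sum_subset (range_subset_range.mpr (by omega : (i:ℕ)+1 ≤ n+1))
          (fun x _ hx => if_neg (by simp only [mem_range] at hx; omega))]
      rw [sum_congr rfl (fun k hk => if_pos (by simp only [mem_range] at hk; omega))]
      rw [← conv1 hIle, ← Finset.sum_range_reflect (fun k => sigma0 k * rho ((i:ℕ) - k))]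
      refine sum_congr rfl fun k hk => ?_
      simp only [mem_range] at hk
      have h1 : (i : ℕ) + 1 - 1 - k = (i:ℕ) - k := by omega
      have h2 : (i : ℕ) - ((i:ℕ) - k) = k := by omega
      rw [h1, h2]
    have hinv : E⁻¹ * E = 1 := Matrix.nonsing_inv_mul E (by rw [hdet]; exact isUnit_one)
    calc (fun i : Fin (n+1) => rhoZ (i : ℤ))
        = (1 : Matrix (Fin (n+1)) (Fin (n+1)) ℤ).mulVec (fun i : Fin (n+1) => rhoZ (i : ℤ)) :=
          (Matrix.one_mulVec _).symm
      _ = (E⁻¹ * E).mulVec (fun i : Fin (n+1) => rhoZ (i : ℤ)) := by rw [hinv]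
      _ = E⁻¹.mulVec (E.mulVec (fun i : Fin (n+1) => rhoZ (i : ℤ))) :=
          (Matrix.mulVec_mulVec _ _ _).symm
      _ = E⁻¹.mulVec (fun k : Fin (n+1) => sigmaSeq k) := by rw [hmv]
  · intro i hi
    rw [hrz, ← conv2 hi, ← Finset.sum_range_reflect (fun k => (partN k : ℤ) * sigmaSeq (i - k))]
    refine sum_congr rfl fun k hk => ?_
    simp only [mem_range] at hk
    have h1 : i + 1 - 1 - k = i - k := by omega
    have h2 : i - (i - k) = k := by omega
    rw [h1, h2]
end
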